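/- For a semigroup S, the following are equivalent: (1) H_L(S) = 1 and H_R(S) = 1; (2) H_L(S) = 1 and H_R(S) is finite; (3) H_L(S) = 1 and S is stable; (4) H_R(S) = 1 and H_L(S) is finite; (5) H_R(S) = 1 and S is stable; (6) H_J(S) = 1 and S is stable; (7) H_H(S) = 1; (8) S is completely simple. -/

import Mathlib

namespace GreenHeights

universe u

section Defs

variable {S : Type u} [Semigroup S]

/-- Green's preorder `≤_L`: `a ≤_L b` iff `a = s * b` for some `s ∈ S¹`
(i.e. `a = b` or `a = s * b` for some `s ∈ S`). -/
def leL (a b : S) : Prop := a = b ∨ ∃ s : S, a = s * b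

/-- Green's preorder `≤_R`: `a ≤_R b` iff `a = b * s` for some `s ∈ S¹`. -/
def leR (a b : S) : Prop := a = b ∨ ∃ s : S, a = b * s

/-- Green's preorder `≤_J`: `a ≤_J b` iff `a = s * b * t` for some `s, t ∈ S¹`. -/
def leJ (a b : S) : Prop :=
  a = b ∨ (∃ s : S, a = s * b) ∨ (∃ t : S, a = b * t) ∨ ∃ s t : S, a = s * b * t

/-- Green's preorder `≤_H`. -/
def leH (a b : S) : Prop := leL a b ∧ leR a b

/-- Green's relation `L`. -/
def eqvL (a b : S) : Prop := leL a b ∧ leL b a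

/-- Green's relation `R`. -/
def eqvR (a b : S) : Prop := leR a b ∧ leR b a

/-- Green's relation `J`. -/
def eqvJ (a b : S) : Prop := leJ a b ∧ leJ b a

/-- Green's relation `H`. -/
def eqvH (a b : S) : Prop := leH a b ∧ leH b a

/-- `a <_L b`. -/
def ltL (a b : S) : Prop := leL a b ∧ ¬ leL b a

/-- `a <_R b`. -/
def ltR (a b : S) : Prop := leR a b ∧ ¬ leR b a

/-- `a <_J b`. -/
def ltJ (a b : S) : Prop := leJ a b ∧ ¬ leJ b a

/-- `a <_H b`. -/
def ltH (a b : S) : Prop := leH a b ∧ ¬ leH b a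

end Defs

/-- The set of lengths of strictly decreasing chains with respect to a relation `lt`:
`m` is a chain length if there is a sequence `c 0 >' c 1 >' … >' c (m-1)`. -/
def chainLengths {T : Type u} (lt : T → T → Prop) : Set ℕ :=
  {m | ∃ c : Fin m → T, ∀ i j : Fin m, i < j → lt (c j) (c i)}

/-- The height: the supremum, in `ℕ∞`, of the lengths of strictly decreasing chains. -/
noncomputable def heightOf {T : Type u} (lt : T → T → Prop) : ℕ∞ :=
  ⨆ m ∈ chainLengths lt, (m : ℕ∞)

/-- The `L`-height of a semigroup. -/
noncomputable def HL (S : Type u) [Semigroup S] : ℕ∞ := heightOf (ltL (S := S))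

/-- The `R`-height of a semigroup. -/
noncomputable def HR (S : Type u) [Semigroup S] : ℕ∞ := heightOf (ltR (S := S))

/-- The `J`-height of a semigroup. -/
noncomputable def HJ (S : Type u) [Semigroup S] : ℕ∞ := heightOf (ltJ (S := S))

/-- The `H`-height of a semigroup. -/
noncomputable def HH (S : Type u) [Semigroup S] : ℕ∞ := heightOf (ltH (S := S))

/-- `S` is left stable if `a ≤_L b` and `a J b` imply `a L b`. -/
def LeftStable (S : Type u) [Semigroup S] : Prop :=
  ∀ a b : S, leL a b → eqvJ a b → eqvL a b

/-- `S` is right stable if `a ≤_R b` and `a J b` imply `a R b`. -/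
def RightStable (S : Type u) [Semigroup S] : Prop :=
  ∀ a b : S, leR a b → eqvJ a b → eqvR a b

/-- `S` is stable if it is both left and right stable. -/
def Stable (S : Type u) [Semigroup S] : Prop := LeftStable S ∧ RightStable S

section Stmt5

variable (S : Type u) [Semigroup S]

/-- `S` is simple: any two elements are `J`-related. -/
def SimpleSemigroup : Prop := ∀ a b : S, eqvJ a b

/-- `S` is completely simple: simple, with a minimal `L`-class and a minimal `R`-class. -/
def CompletelySimple : Prop :=
  SimpleSemigroup S ∧
  (∃ a : S, ∀ b : S, leL b a → eqvL b a) ∧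
  (∃ a : S, ∀ b : S, leR b a → eqvR b a)

end Stmt5

/- ====================== auxiliary lemmas ====================== -/

section Aux

variable {S : Type u} [Semigroup S]

lemma leL_refl (a : S) : leL a a := Or.inl rfl
lemma leR_refl (a : S) : leR a a := Or.inl rfl

lemma leL_trans {a b c : S} (h1 : leL a b) (h2 : leL b c) : leL a c := by
  rcases h1 with rfl | ⟨s, rfl⟩
  · exact h2
  · rcases h2 with rfl | ⟨t, rfl⟩
    · exact Or.inr ⟨s, rfl⟩
    · exact Or.inr ⟨s * t, (mul_assoc ..).symm⟩

lemma leR_trans {a b c : S} (h1 : leR a b) (h2 : leR b c) : leR a c := by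
  rcases h1 with rfl | ⟨s, rfl⟩
  · exact h2
  · rcases h2 with rfl | ⟨t, rfl⟩
    · exact Or.inr ⟨s, rfl⟩
    · exact Or.inr ⟨t * s, mul_assoc ..⟩

/-- height = 1 iff nonempty and no strict pair. -/
lemma height_eq_one_iff {T : Type u} (lt : T → T → Prop) :
    heightOf lt = 1 ↔ Nonempty T ∧ ∀ a b : T, ¬ lt a b := by
  constructor
  · intro h
    constructor
    · by_contra hne
      have hE : IsEmpty T := not_nonempty_iff.1 hne
      have h0 : heightOf lt = 0 := by
        refine le_antisymm ?_ zero_le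
        refine iSup₂_le fun m hm => ?_
        obtain ⟨c, -⟩ := hm
        match m with
        | 0 => exact le_rfl
        | (m + 1) => exact (hE.false (c 0)).elim
      rw [h0] at h
      exact (by norm_num : (0 : ℕ∞) ≠ 1) h
    · intro a b hab
      have h2 : 2 ∈ chainLengths lt := by
        refine ⟨![b, a], fun i j hij => ?_⟩
        fin_cases i <;> fin_cases j <;> simp_all
      have h2' : (2 : ℕ∞) ≤ heightOf lt := by
        have := le_iSup₂ (f := fun (m : ℕ) (_ : m ∈ chainLengths lt) => (m : ℕ∞)) 2 h2
        simpa [heightOf] using this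
      rw [h] at h2'
      norm_num at h2'
  · rintro ⟨⟨x⟩, hlt⟩
    refine le_antisymm ?_ ?_
    · refine iSup₂_le fun m hm => ?_
      obtain ⟨c, hc⟩ := hm
      have hm1 : m ≤ 1 := by
        by_contra hgt
        push_neg at hgt
        exact hlt _ _ (hc ⟨0, by omega⟩ ⟨1, by omega⟩ (by simp [Fin.lt_def]))
      exact_mod_cast Nat.cast_le.2 hm1
    · have h1 : 1 ∈ chainLengths lt := by
        refine ⟨fun _ => x, fun i j hij => ?_⟩
        have hi := i.2; have hj := j.2
        have := Fin.lt_def.1 hij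
        omega
      have := le_iSup₂ (f := fun (m : ℕ) (_ : m ∈ chainLengths lt) => (m : ℕ∞)) 1 h1
      simpa [heightOf] using this

/-- If the height is finite, every descending sequence stabilises (up to le). -/
lemma exists_of_height_lt_top {T : Type u} (le lt : T → T → Prop)
    (hlt : ∀ a b, lt a b ↔ le a b ∧ ¬ le b a)
    (htr : ∀ {a b c}, le a b → le b c → le a c)
    (hrefl : ∀ a, le a a)
    (h : heightOf lt < ⊤) (f : ℕ → T) (hf : ∀ n, le (f (n + 1)) (f n)) :
    ∃ n, le (f n) (f (n + 1)) := by
  by_contra hc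
  push_neg at hc
  have hstep : ∀ i d, le (f (i + d)) (f i) := by
    intro i d
    induction d with
    | zero => exact hrefl _
    | succ d ih => exact htr (hf (i + d)) ih
  have hall : ∀ m : ℕ, m ∈ chainLengths lt := by
    intro m
    refine ⟨fun i => f i, fun i j hij => ?_⟩
    have hij' := Fin.lt_def.1 hij
    rw [hlt]
    constructor
    · have : (i : ℕ) + ((j : ℕ) - i) = j := by omega
      have := hstep (i : ℕ) ((j : ℕ) - i)
      rwa [show (i : ℕ) + ((j : ℕ) - i) = j by omega] at this
    · intro hle
      apply hc i
      have h2 : le (f j) (f ((i : ℕ) + 1)) := by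
        have := hstep ((i : ℕ) + 1) ((j : ℕ) - ((i : ℕ) + 1))
        rwa [show (i : ℕ) + 1 + ((j : ℕ) - ((i : ℕ) + 1)) = j by omega] at this
      exact htr hle h2
  have hge : ∀ m : ℕ, (m : ℕ∞) ≤ heightOf lt := by
    intro m
    have := le_iSup₂ (f := fun (m : ℕ) (_ : m ∈ chainLengths lt) => (m : ℕ∞)) m (hall m)
    simpa [heightOf] using this
  obtain ⟨n, hn⟩ := WithTop.ne_top_iff_exists.1 h.ne
  have h2 := hge (n + 1)
  rw [← hn] at h2
  exact absurd (ENat.coe_le_coe.mp h2) (by omega)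

lemma HL_eq_one_iff : HL S = 1 ↔ Nonempty S ∧ ∀ a b : S, leL a b → leL b a := by
  rw [HL, height_eq_one_iff]
  simp only [ltL, not_and, not_not]

lemma HR_eq_one_iff : HR S = 1 ↔ Nonempty S ∧ ∀ a b : S, leR a b → leR b a := by
  rw [HR, height_eq_one_iff]
  simp only [ltR, not_and, not_not]

lemma HJ_eq_one_iff : HJ S = 1 ↔ Nonempty S ∧ ∀ a b : S, leJ a b → leJ b a := by
  rw [HJ, height_eq_one_iff]
  simp only [ltJ, not_and, not_not]

lemma HH_eq_one_iff : HH S = 1 ↔ Nonempty S ∧ ∀ a b : S, leH a b → leH b a := by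
  rw [HH, height_eq_one_iff]
  simp only [ltH, not_and, not_not]

/-- Right iteration helper. -/
def fR {S : Type u} [Semigroup S] (b q : S) : ℕ → S
  | 0 => b
  | (n + 1) => fR b q n * q

/-- Left iteration helper. -/
def fL {S : Type u} [Semigroup S] (b p : S) : ℕ → S
  | 0 => b
  | (n + 1) => p * fL b p n

/-- Chain argument on the right. -/
lemma chainR (h : HR S < ⊤) (b p q : S) (hb : b = p * (b * q)) :
    b = b * q ∨ ∃ t : S, b = b * (q * t) := by
  have hfs : ∀ n, fR b q (n + 1) = fR b q n * q := fun n => rfl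
  have hf0 : fR b q 0 = b := rfl
  have hw : ∀ n, b = (fR b q) n ∨ ∃ w : S, b = w * (fR b q) n := by
    intro n
    induction n with
    | zero => exact Or.inl hf0.symm
    | succ n ih =>
      rcases ih with hb' | ⟨w, hb'⟩
      · refine Or.inr ⟨p, ?_⟩
        rw [hfs n, ← hb']
        exact hb
      · refine Or.inr ⟨p * w, ?_⟩
        rw [hfs n]
        calc b = p * (b * q) := hb
          _ = p * ((w * (fR b q) n) * q) := by rw [← hb']
          _ = (p * w) * ((fR b q) n * q) := by simp only [mul_assoc]
  obtain ⟨n, hn⟩ := exists_of_height_lt_top leR ltR (fun _ _ => Iff.rfl)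
    leR_trans leR_refl h (fR b q) (fun n => Or.inr ⟨q, (hfs n)⟩)
  rcases hw n with hb' | ⟨w, hb'⟩
  · rcases hn with heq | ⟨t, ht⟩
    · left
      calc b = (fR b q) n := hb'
        _ = (fR b q) n * q := by rw [← hfs n, ← heq]
        _ = b * q := by rw [← hb']
    · right
      refine ⟨t, ?_⟩
      calc b = (fR b q) n := hb'
        _ = ((fR b q) n * q) * t := by rw [← hfs n]; exact ht
        _ = (fR b q) n * (q * t) := by rw [mul_assoc]
        _ = b * (q * t) := by rw [← hb']
  · rcases hn with heq | ⟨t, ht⟩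
    · left
      calc b = w * (fR b q) n := hb'
        _ = w * ((fR b q) n * q) := by rw [← hfs n, ← heq]
        _ = (w * (fR b q) n) * q := by rw [mul_assoc]
        _ = b * q := by rw [← hb']
    · right
      refine ⟨t, ?_⟩
      calc b = w * (fR b q) n := hb'
        _ = w * (((fR b q) n * q) * t) := by rw [← hfs n, ← ht]
        _ = (w * (fR b q) n) * (q * t) := by simp only [mul_assoc]
        _ = b * (q * t) := by rw [← hb']

/-- Chain argument on the left. -/
lemma chainL (h : HL S < ⊤) (b p q : S) (hb : b = (p * b) * q) :
    b = p * b ∨ ∃ t : S, b = (t * p) * b := by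
  have hfs : ∀ n, fL b p (n + 1) = p * fL b p n := fun n => rfl
  have hf0 : fL b p 0 = b := rfl
  have hw : ∀ n, b = (fL b p) n ∨ ∃ w : S, b = (fL b p) n * w := by
    intro n
    induction n with
    | zero => exact Or.inl hf0.symm
    | succ n ih =>
      rcases ih with hb' | ⟨w, hb'⟩
      · refine Or.inr ⟨q, ?_⟩
        rw [hfs n, ← hb']
        exact hb
      · refine Or.inr ⟨w * q, ?_⟩
        rw [hfs n]
        calc b = (p * b) * q := hb
          _ = (p * ((fL b p) n * w)) * q := by rw [← hb']
          _ = (p * (fL b p) n) * (w * q) := by simp only [mul_assoc]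
  obtain ⟨n, hn⟩ := exists_of_height_lt_top leL ltL (fun _ _ => Iff.rfl)
    leL_trans leL_refl h (fL b p) (fun n => Or.inr ⟨p, (hfs n)⟩)
  rcases hw n with hb' | ⟨w, hb'⟩
  · rcases hn with heq | ⟨t, ht⟩
    · left
      calc b = (fL b p) n := hb'
        _ = p * (fL b p) n := by rw [← hfs n, ← heq]
        _ = p * b := by rw [← hb']
    · right
      refine ⟨t, ?_⟩
      calc b = (fL b p) n := hb'
        _ = t * (p * (fL b p) n) := by rw [← hfs n]; exact ht
        _ = (t * p) * (fL b p) n := by rw [mul_assoc]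
        _ = (t * p) * b := by rw [← hb']
  · rcases hn with heq | ⟨t, ht⟩
    · left
      calc b = (fL b p) n * w := hb'
        _ = (p * (fL b p) n) * w := by rw [← hfs n, ← heq]
        _ = p * ((fL b p) n * w) := by rw [mul_assoc]
        _ = p * b := by rw [← hb']
    · right
      refine ⟨t, ?_⟩
      calc b = (fL b p) n * w := hb'
        _ = (t * (p * (fL b p) n)) * w := by rw [← hfs n, ← ht]
        _ = (t * p) * ((fL b p) n * w) := by simp only [mul_assoc]
        _ = (t * p) * b := by rw [← hb']

lemma rightStable_of_lt_top (h : HR S < ⊤) : RightStable S := by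
  intro a b hab hJ
  refine ⟨hab, ?_⟩
  rcases hab with rfl | ⟨s, rfl⟩
  · exact leR_refl _
  rcases hJ.2 with heq | ⟨u, hu⟩ | ⟨v, hv⟩ | ⟨u, v, huv⟩
  · exact Or.inl heq
  · -- hu : b = u * (b * s)
    rcases chainR h b u s hu with h1 | ⟨t, ht⟩
    · exact Or.inl h1
    · exact Or.inr ⟨t, by rw [mul_assoc]; exact ht⟩
  · exact Or.inr ⟨v, hv⟩
  · -- huv : b = u * (b * s) * v
    have huv' : b = u * (b * (s * v)) := by
      conv_lhs => rw [huv]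
      simp only [mul_assoc]
    rcases chainR h b u (s * v) huv' with h1 | ⟨t, ht⟩
    · exact Or.inr ⟨v, by rw [mul_assoc]; exact h1⟩
    · exact Or.inr ⟨v * t, by simpa only [mul_assoc] using ht⟩

lemma leftStable_of_lt_top (h : HL S < ⊤) : LeftStable S := by
  intro a b hab hJ
  refine ⟨hab, ?_⟩
  rcases hab with rfl | ⟨s, rfl⟩
  · exact leL_refl _
  rcases hJ.2 with heq | ⟨u, hu⟩ | ⟨v, hv⟩ | ⟨u, v, huv⟩
  · exact Or.inl heq
  · exact Or.inr ⟨u, hu⟩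
  · -- hv : b = (s * b) * v
    rcases chainL h b s v hv with h1 | ⟨t, ht⟩
    · exact Or.inl h1
    · exact Or.inr ⟨t, by rw [← mul_assoc]; exact ht⟩
  · -- huv : b = u * (s * b) * v
    have huv' : b = ((u * s) * b) * v := by
      conv_lhs => rw [huv]
      simp only [mul_assoc]
    rcases chainL h b (u * s) v huv' with h1 | ⟨t, ht⟩
    · exact Or.inr ⟨u, by rw [← mul_assoc]; exact h1⟩
    · exact Or.inr ⟨t * u, by simpa only [mul_assoc] using ht⟩

lemma leJ_of_minL (hmin : ∀ a b : S, leL a b → leL b a) (a b : S) : leJ a b := by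
  rcases hmin (b * a) a (Or.inr ⟨b, rfl⟩) with heq | ⟨w, hw⟩
  · exact Or.inr (Or.inr (Or.inl ⟨a, heq⟩))
  · exact Or.inr (Or.inr (Or.inr ⟨w, a, by rw [mul_assoc]; exact hw⟩))

lemma leJ_of_minR (hmin : ∀ a b : S, leR a b → leR b a) (a b : S) : leJ a b := by
  rcases hmin (a * b) a (Or.inr ⟨b, rfl⟩) with heq | ⟨t, ht⟩
  · exact Or.inr (Or.inl ⟨a, heq⟩)
  · exact Or.inr (Or.inr (Or.inr ⟨a, t, ht⟩))

lemma leJ_of_minJ (hmin : ∀ a b : S, leJ a b → leJ b a) (a b : S) : leJ b a := by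
  rcases hmin (a * b) b (Or.inr (Or.inl ⟨a, rfl⟩)) with heq | ⟨s, hs⟩ | ⟨t, ht⟩ | ⟨s, t, hst⟩
  · -- heq : b = a * b
    exact Or.inr (Or.inr (Or.inl ⟨b, heq⟩))
  · -- hs : b = s * (a * b)
    exact Or.inr (Or.inr (Or.inr ⟨s, b, by rw [mul_assoc]; exact hs⟩))
  · -- ht : b = (a * b) * t
    exact Or.inr (Or.inr (Or.inl ⟨b * t, by rw [← mul_assoc]; exact ht⟩))
  · -- hst : b = s * (a * b) * t
    exact Or.inr (Or.inr (Or.inr ⟨s, b * t, by simpa only [mul_assoc] using hst⟩))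

/-- Minimality of an `L`-class is preserved by `L`-equivalence. -/
lemma minL_eqv {a x : S} (ha : ∀ b, leL b a → leL a b) (hxa : leL x a) (hax : leL a x) :
    ∀ b, leL b x → leL x b :=
  fun b hb => leL_trans hxa (ha b (leL_trans hb hxa))

lemma minR_eqv {a x : S} (ha : ∀ b, leR b a → leR a b) (hxa : leR x a) (hax : leR a x) :
    ∀ b, leR b x → leR x b :=
  fun b hb => leR_trans hxa (ha b (leR_trans hb hxa))

/-- Minimality of an `L`-class is preserved under right translation. -/
lemma minL_mul {a : S} (ha : ∀ b, leL b a → leL a b) (s : S) :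
    ∀ b, leL b (a * s) → leL (a * s) b := by
  intro b hb
  rcases hb with heq | ⟨u, hu⟩
  · exact Or.inl heq.symm
  · rcases ha (u * a) (Or.inr ⟨u, rfl⟩) with h1 | ⟨v, hv⟩
    · refine Or.inl ?_
      calc a * s = (u * a) * s := by rw [← h1]
        _ = u * (a * s) := by rw [mul_assoc]
        _ = b := hu.symm
    · refine Or.inr ⟨v, ?_⟩
      calc a * s = (v * (u * a)) * s := by rw [← hv]
        _ = v * (u * (a * s)) := by simp only [mul_assoc]
        _ = v * b := by rw [← hu]

/-- Minimality of an `R`-class is preserved under left translation. -/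
lemma minR_mul {a : S} (ha : ∀ b, leR b a → leR a b) (s : S) :
    ∀ b, leR b (s * a) → leR (s * a) b := by
  intro b hb
  rcases hb with heq | ⟨u, hu⟩
  · exact Or.inl heq.symm
  · rcases ha (a * u) (Or.inr ⟨u, rfl⟩) with h1 | ⟨v, hv⟩
    · refine Or.inl ?_
      calc s * a = s * (a * u) := by rw [← h1]
        _ = (s * a) * u := by rw [mul_assoc]
        _ = b := hu.symm
    · refine Or.inr ⟨v, ?_⟩
      calc s * a = s * ((a * u) * v) := by rw [← hv]
        _ = ((s * a) * u) * v := by simp only [mul_assoc]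
        _ = b * v := by rw [← hu]

/-- In a completely simple semigroup every `L`-class is minimal. -/
lemma minL_of_cs (h : CompletelySimple S) : ∀ a b : S, leL a b → leL b a := by
  obtain ⟨hsimple, ⟨a0, ha0⟩, -⟩ := h
  have hm : ∀ b, leL b a0 → leL a0 b := fun b hb => (ha0 b hb).2
  have key : ∀ x : S, ∀ b, leL b x → leL x b := by
    intro x
    rcases (hsimple x a0).1 with heq | ⟨s, hs⟩ | ⟨t, ht⟩ | ⟨s, t, hst⟩
    · subst heq; exact hm
    · subst hs
      exact minL_eqv hm (Or.inr ⟨s, rfl⟩) (hm _ (Or.inr ⟨s, rfl⟩))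
    · subst ht
      exact minL_mul hm t
    · subst hst
      exact minL_mul (minL_eqv hm (Or.inr ⟨s, rfl⟩) (hm _ (Or.inr ⟨s, rfl⟩))) t
  exact fun a b hab => key b a hab

/-- In a completely simple semigroup every `R`-class is minimal. -/
lemma minR_of_cs (h : CompletelySimple S) : ∀ a b : S, leR a b → leR b a := by
  obtain ⟨hsimple, -, ⟨a0, ha0⟩⟩ := h
  have hm : ∀ b, leR b a0 → leR a0 b := fun b hb => (ha0 b hb).2
  have key : ∀ x : S, ∀ b, leR b x → leR x b := by
    intro x
    rcases (hsimple x a0).1 with heq | ⟨s, hs⟩ | ⟨t, ht⟩ | ⟨s, t, hst⟩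
    · subst heq; exact hm
    · subst hs
      exact minR_mul hm s
    · subst ht
      exact minR_eqv hm (Or.inr ⟨t, rfl⟩) (hm _ (Or.inr ⟨t, rfl⟩))
    · subst hst
      have h1 := minR_mul hm s
      exact minR_eqv h1 (Or.inr ⟨t, rfl⟩) (h1 _ (Or.inr ⟨t, rfl⟩))
  exact fun a b hab => key b a hab

/-- `Good` : the pivot statement. -/
def Good (S : Type u) [Semigroup S] : Prop :=
  Nonempty S ∧ (∀ a b : S, leL a b → leL b a) ∧ (∀ a b : S, leR a b → leR b a)

lemma good_simple (h : Good S) : SimpleSemigroup S :=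
  fun a b => ⟨leJ_of_minL h.2.1 a b, leJ_of_minL h.2.1 b a⟩

lemma good_stable (h : Good S) : Stable S :=
  ⟨fun a b hab _ => ⟨hab, h.2.1 a b hab⟩, fun a b hab _ => ⟨hab, h.2.2 a b hab⟩⟩

/-- `HH = 1` gives minimality of all `L`- and `R`-classes. -/
lemma good_of_HH (hne : Nonempty S) (hH : ∀ a b : S, leH a b → leH b a) : Good S := by
  have key : ∀ x y : S, leH x (x * y * x) := by
    intro x y
    exact hH (x * y * x) x ⟨Or.inr ⟨x * y, rfl⟩, Or.inr ⟨y * x, mul_assoc x y x⟩⟩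
  refine ⟨hne, ?_, ?_⟩
  · intro a b hab
    rcases hab with rfl | ⟨s, rfl⟩
    · exact leL_refl _
    rcases (key b s).1 with heq | ⟨q, hq⟩
    · -- heq : b = b * s * b
      exact Or.inr ⟨b, by rw [← mul_assoc]; exact heq⟩
    · -- hq : b = q * (b * s * b)
      exact Or.inr ⟨q * b, by simpa only [mul_assoc] using hq⟩
  · intro a b hab
    rcases hab with rfl | ⟨s, rfl⟩
    · exact leR_refl _
    rcases (key b s).2 with heq | ⟨q, hq⟩
    · -- heq : b = b * s * b
      exact Or.inr ⟨b, heq⟩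
    · -- hq : b = (b * s * b) * q
      exact Or.inr ⟨b * q, by simpa only [mul_assoc] using hq⟩

lemma good_iff_1 : Good S ↔ (HL S = 1 ∧ HR S = 1) := by
  rw [HL_eq_one_iff, HR_eq_one_iff]
  unfold Good
  tauto

lemma one_lt_top_enat : (1 : ℕ∞) < ⊤ := by
  exact lt_top_iff_ne_top.2 (by simp)

lemma iff2 : (HL S = 1 ∧ HR S < ⊤) ↔ Good S := by
  constructor
  · rintro ⟨h1, h2⟩
    obtain ⟨hne, hL⟩ := HL_eq_one_iff.1 h1
    have rs := rightStable_of_lt_top h2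
    have simple : ∀ a b : S, eqvJ a b :=
      fun a b => ⟨leJ_of_minL hL a b, leJ_of_minL hL b a⟩
    exact ⟨hne, hL, fun a b hab => (rs a b hab (simple a b)).2⟩
  · intro g
    refine ⟨(good_iff_1.1 g).1, ?_⟩
    rw [(good_iff_1.1 g).2]
    exact one_lt_top_enat

lemma iff3 : (HL S = 1 ∧ Stable S) ↔ Good S := by
  constructor
  · rintro ⟨h1, hst⟩
    obtain ⟨hne, hL⟩ := HL_eq_one_iff.1 h1
    have simple : ∀ a b : S, eqvJ a b :=
      fun a b => ⟨leJ_of_minL hL a b, leJ_of_minL hL b a⟩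
    exact ⟨hne, hL, fun a b hab => (hst.2 a b hab (simple a b)).2⟩
  · intro g
    exact ⟨(good_iff_1.1 g).1, good_stable g⟩

lemma iff4 : (HR S = 1 ∧ HL S < ⊤) ↔ Good S := by
  constructor
  · rintro ⟨h1, h2⟩
    obtain ⟨hne, hR⟩ := HR_eq_one_iff.1 h1
    have ls := leftStable_of_lt_top h2
    have simple : ∀ a b : S, eqvJ a b :=
      fun a b => ⟨leJ_of_minR hR a b, leJ_of_minR hR b a⟩
    exact ⟨hne, fun a b hab => (ls a b hab (simple a b)).2, hR⟩
  · intro g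
    refine ⟨(good_iff_1.1 g).2, ?_⟩
    rw [(good_iff_1.1 g).1]
    exact one_lt_top_enat

lemma iff5 : (HR S = 1 ∧ Stable S) ↔ Good S := by
  constructor
  · rintro ⟨h1, hst⟩
    obtain ⟨hne, hR⟩ := HR_eq_one_iff.1 h1
    have simple : ∀ a b : S, eqvJ a b :=
      fun a b => ⟨leJ_of_minR hR a b, leJ_of_minR hR b a⟩
    exact ⟨hne, fun a b hab => (hst.1 a b hab (simple a b)).2, hR⟩
  · intro g
    exact ⟨(good_iff_1.1 g).2, good_stable g⟩

lemma iff6 : (HJ S = 1 ∧ Stable S) ↔ Good S := by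
  constructor
  · rintro ⟨h1, hst⟩
    obtain ⟨hne, hJ⟩ := HJ_eq_one_iff.1 h1
    have simple : ∀ a b : S, eqvJ a b :=
      fun a b => ⟨leJ_of_minJ hJ b a, leJ_of_minJ hJ a b⟩
    exact ⟨hne, fun a b hab => (hst.1 a b hab (simple a b)).2,
      fun a b hab => (hst.2 a b hab (simple a b)).2⟩
  · intro g
    refine ⟨HJ_eq_one_iff.2 ⟨g.1, fun a b _ => leJ_of_minL g.2.1 b a⟩, good_stable g⟩

lemma iff7 : (HH S = 1) ↔ Good S := by
  constructor
  · intro h1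
    obtain ⟨hne, hH⟩ := HH_eq_one_iff.1 h1
    exact good_of_HH hne hH
  · intro g
    exact HH_eq_one_iff.2 ⟨g.1, fun a b hab => ⟨g.2.1 a b hab.1, g.2.2 a b hab.2⟩⟩

lemma iff8 : CompletelySimple S ↔ Good S := by
  constructor
  · intro h
    obtain ⟨a, -⟩ := h.2.1
    exact ⟨⟨a⟩, minL_of_cs h, minR_of_cs h⟩
  · intro g
    obtain ⟨x⟩ := g.1
    exact ⟨good_simple g, ⟨x, fun b hb => ⟨hb, g.2.1 b x hb⟩⟩,
      ⟨x, fun b hb => ⟨hb, g.2.2 b x hb⟩⟩⟩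


end Aux

/-- Equivalent characterisations of completely simple semigroups in terms
of Green heights and stability. -/
theorem completely_simple_tfae (S : Type u) [Semigroup S] :
    List.TFAE [HL S = 1 ∧ HR S = 1,
      HL S = 1 ∧ HR S < ⊤,
      HL S = 1 ∧ Stable S,
      HR S = 1 ∧ HL S < ⊤,
      HR S = 1 ∧ Stable S,
      HJ S = 1 ∧ Stable S,
      HH S = 1,
      CompletelySimple S] := by
  tfae_have 1 ↔ 8 := good_iff_1.symm.trans iff8.symm
  tfae_have 2 ↔ 8 := iff2.trans iff8.symm
  tfae_have 3 ↔ 8 := iff3.trans iff8.symm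
  tfae_have 4 ↔ 8 := iff4.trans iff8.symm
  tfae_have 5 ↔ 8 := iff5.trans iff8.symm
  tfae_have 6 ↔ 8 := iff6.trans iff8.symm
  tfae_have 7 ↔ 8 := iff7.trans iff8.symm
  tfae_finish

end GreenHeights
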